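/- For every map u from the set of edges to {−1,1}, every integer x, and every integer t ≥ 1: a₁(x,t+1,u) = (1/√2)·u(x+1/2, t+1/2)·(a₁(x+1,t,u) + a₂(x+1,t,u)) and a₂(x,t+1,u) = (1/√2)·u(x−1/2, t+1/2)·(a₂(x−1,t,u) − a₁(x−1,t,u)). -/

import Mathlib

open scoped BigOperators

/-- The final x-coordinate of a checker path from `(0,0)` encoded by its sequence of moves
(`true` = move `(1,1)`, `false` = move `(-1,1)`). -/
def moveEndpoint {n : ℕ} (d : Fin n → Bool) : ℤ :=
  ∑ k, (if d k then (1 : ℤ) else -1)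

/-- The number of turns of a checker path encoded by its sequence of moves. -/
def nturns {n : ℕ} (d : Fin n → Bool) : ℕ :=
  ((List.ofFn d).zip (List.ofFn d).tail).countP fun p => p.1 != p.2

/-- Checker paths from `(0,0)` to `(x,t)` whose first step is to `(1,1)`,
encoded by their sequences of moves. -/
def cpaths (x t : ℤ) : Finset (Fin t.toNat → Bool) :=
  Finset.univ.filter fun d => moveEndpoint d = x ∧ (List.ofFn d).headI = true

/-- The x-coordinate of the `k`-th point of the path encoded by moves `d`. -/
def cpos {n : ℕ} (d : Fin n → Bool) (k : Fin n) : ℤ :=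
  ∑ j ∈ Finset.univ.filter (fun j : Fin n => (j : ℕ) < (k : ℕ)), (if d j then (1 : ℤ) else -1)

/-- Product of the values of the field `u` over the edges of the path encoded by `d`.
Here `u x t` denotes the value of the field on the edge with midpoint `(x + 1/2, t + 1/2)`. -/
def fieldWeight (u : ℤ → ℤ → ℝ) {n : ℕ} (d : Fin n → Bool) : ℝ :=
  ∏ k : Fin n, (if d k then u (cpos d k) (k : ℕ) else u (cpos d k - 1) (k : ℕ))

/-- Feynman checkers amplitude `a(x,t,u)` in an external field `u`, where `u x t` is
the value of the field on the edge with midpoint `(x + 1/2, t + 1/2)`. -/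
noncomputable def af (u : ℤ → ℤ → ℝ) (x t : ℤ) : ℂ :=
  (Real.sqrt 2 : ℂ) ^ (1 - t) * Complex.I *
    ∑ d ∈ cpaths x t, (-Complex.I) ^ nturns d * (fieldWeight u d : ℂ)

namespace DiracAux

def turnsL : List Bool → ℕ
  | a :: b :: l => (if a != b then 1 else 0) + turnsL (b :: l)
  | _ => 0

lemma countP_eq_turnsL : ∀ l : List Bool,
    (l.zip l.tail).countP (fun p => p.1 != p.2) = turnsL l
  | [] => rfl
  | [_] => rfl
  | a :: b :: l => by
      have ih := countP_eq_turnsL (b :: l)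
      simp only [List.tail_cons, List.zip_cons_cons, List.countP_cons, turnsL] at *
      simp only [← ih]
      rcases Bool.decEq a b with h | h <;> simp [*] <;> omega

lemma nturns_eq {n : ℕ} (d : Fin n → Bool) : nturns d = turnsL (List.ofFn d) :=
  countP_eq_turnsL _

lemma turnsL_append : ∀ (l : List Bool) (hl : l ≠ []) (b : Bool),
    turnsL (l ++ [b]) = turnsL l + (if l.getLast hl != b then 1 else 0)
  | [], hl, b => absurd rfl hl
  | [a], _, b => by simp [turnsL]
  | a :: c :: l, _, b => by
      have ih := turnsL_append (c :: l) (by simp) b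
      simp only [List.cons_append, List.append_eq, turnsL] at *
      rw [List.getLast_cons (by simp), ih]
      omega

lemma even_turnsL : ∀ (l : List Bool) (hl : l ≠ []),
    (Even (turnsL l) ↔ l.getLast hl = l.headI)
  | [], hl => absurd rfl hl
  | [a], _ => by simp [turnsL]
  | a :: c :: l, _ => by
      have ih := even_turnsL (c :: l) (by simp)
      rw [List.getLast_cons (by simp)]
      simp only [turnsL, List.headI] at *
      rw [Nat.even_add]
      rcases a <;> rcases c <;> simp_all <;>
        rcases (c :: l).getLast (by simp) with _ | _ <;> simp_all

lemma ofFn_snoc {n : ℕ} (d : Fin n → Bool) (b : Bool) :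
    List.ofFn (Fin.snoc d b : Fin (n+1) → Bool) = List.ofFn d ++ [b] := by
  rw [List.ofFn_succ']
  simp [Fin.snoc_castSucc, Fin.snoc_last, List.concat_eq_append]

lemma moveEndpoint_snoc {n : ℕ} (d : Fin n → Bool) (b : Bool) :
    moveEndpoint (Fin.snoc d b : Fin (n+1) → Bool)
      = moveEndpoint d + (if b then 1 else -1) := by
  unfold moveEndpoint
  rw [Fin.sum_univ_castSucc]
  simp [Fin.snoc_castSucc, Fin.snoc_last]

lemma headI_snoc {n : ℕ} (d : Fin (n+1) → Bool) (b : Bool) :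
    (List.ofFn (Fin.snoc d b : Fin (n+2) → Bool)).headI = (List.ofFn d).headI := by
  rw [ofFn_snoc]
  cases h : List.ofFn d with
  | nil => simp [List.ofFn_succ] at h
  | cons a l => simp

lemma nturns_snoc {n : ℕ} (d : Fin (n+1) → Bool) (b : Bool) :
    nturns (Fin.snoc d b : Fin (n+2) → Bool)
      = nturns d + (if d (Fin.last n) != b then 1 else 0) := by
  rw [nturns_eq, nturns_eq, ofFn_snoc,
    turnsL_append (List.ofFn d) (by simp [List.ofFn_succ]) b,
    List.getLast_ofFn]
  rfl

lemma even_nturns {n : ℕ} (d : Fin (n+1) → Bool) (hd : (List.ofFn d).headI = true) :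
    (Even (nturns d) ↔ d (Fin.last n) = true) := by
  rw [nturns_eq, even_turnsL (List.ofFn d) (by simp [List.ofFn_succ]), List.getLast_ofFn, hd]
  rfl

lemma cpos_snoc {n : ℕ} (d : Fin n → Bool) (b : Bool) (k : Fin n) :
    cpos (Fin.snoc d b : Fin (n+1) → Bool) k.castSucc = cpos d k := by
  unfold cpos
  rw [Finset.sum_filter, Finset.sum_filter, Fin.sum_univ_castSucc]
  simp only [Fin.coe_castSucc, Fin.snoc_castSucc, Fin.val_last]
  rw [if_neg (by omega)]
  simp

lemma cpos_snoc_last {n : ℕ} (d : Fin n → Bool) (b : Bool) :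
    cpos (Fin.snoc d b : Fin (n+1) → Bool) (Fin.last n) = moveEndpoint d := by
  unfold cpos moveEndpoint
  rw [Finset.sum_filter, Fin.sum_univ_castSucc]
  simp only [Fin.coe_castSucc, Fin.snoc_castSucc, Fin.val_last]
  rw [if_neg (by omega)]
  simp [Fin.is_lt]

lemma fieldWeight_snoc (u : ℤ → ℤ → ℝ) {n : ℕ} (d : Fin n → Bool) (b : Bool) :
    fieldWeight u (Fin.snoc d b : Fin (n+1) → Bool)
      = fieldWeight u d *
        (if b then u (moveEndpoint d) n else u (moveEndpoint d - 1) n) := by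
  unfold fieldWeight
  rw [Fin.prod_univ_castSucc]
  congr 1
  · exact Finset.prod_congr rfl fun k _ => by
      rw [cpos_snoc]
      simp [Fin.snoc_castSucc]
  · rw [cpos_snoc_last, Fin.snoc_last]
    simp

def snocEquiv (n : ℕ) : ((Fin n → Bool) × Bool) ≃ (Fin (n+1) → Bool) where
  toFun p := Fin.snoc p.1 p.2
  invFun d := (fun i => d i.castSucc, d (Fin.last n))
  left_inv p := by
    ext i
    · simp [Fin.snoc_castSucc]
    · simp [Fin.snoc_last]
  right_inv d := by
    funext i
    refine Fin.lastCases ?_ ?_ i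
    · simp [Fin.snoc_last]
    · intro j; simp [Fin.snoc_castSucc]

noncomputable def zterm (u : ℤ → ℤ → ℝ) {n : ℕ} (d : Fin n → Bool) : ℂ :=
  (-Complex.I) ^ nturns d * (fieldWeight u d : ℂ)

def cpathsN (x : ℤ) (m : ℕ) : Finset (Fin (m+1) → Bool) := by exact cpaths x ((m:ℤ)+1)

noncomputable def Spart (u : ℤ → ℤ → ℝ) (m : ℕ) (x : ℤ) (b : Bool) : ℂ :=
  ∑ d ∈ (cpathsN x m).filter (fun d => d (Fin.last m) = b), zterm u d

lemma sum_cpaths_eq (u : ℤ → ℤ → ℝ) (m : ℕ) (x : ℤ) :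
    ∑ d ∈ cpathsN x m, zterm u d = Spart u m x true + Spart u m x false := by
  rw [← Finset.sum_filter_add_sum_filter_not (cpathsN x m)
    (fun d => d (Fin.last m) = true)]
  congr 1
  apply Finset.sum_congr _ (fun _ _ => rfl)
  apply Finset.filter_congr
  intro d _
  simp

lemma mem_cpathsN {m : ℕ} {x : ℤ} {d : Fin (m+1) → Bool} :
    d ∈ cpathsN x m ↔ moveEndpoint d = x ∧ (List.ofFn d).headI = true := by
  simp [cpathsN, cpaths]

lemma negI_pow_even (k : ℕ) : (-Complex.I)^(k+k) = (((-1:ℝ)^k : ℝ) : ℂ) := by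
  rw [← two_mul, pow_mul, neg_sq, Complex.I_sq]
  push_cast
  ring

lemma negI_pow_odd (k : ℕ) : (-Complex.I)^(k+k+1) = (((-1:ℝ)^k : ℝ) : ℂ) * (-Complex.I) := by
  rw [pow_succ, negI_pow_even]

lemma neg_one_pow_im (k : ℕ) : ((-1:ℂ)^k).im = 0 := by
  rw [show (-1:ℂ) = ((-1:ℝ):ℂ) by norm_num, ← Complex.ofReal_pow, Complex.ofReal_im]

lemma Spart_true_im (u : ℤ → ℤ → ℝ) (m : ℕ) (x : ℤ) : (Spart u m x true).im = 0 := by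
  rw [Spart, Complex.im_sum]
  refine Finset.sum_eq_zero fun d hd => ?_
  rw [Finset.mem_filter, mem_cpathsN] at hd
  obtain ⟨⟨-, hH⟩, hL⟩ := hd
  obtain ⟨k, hk⟩ := (even_nturns d hH).2 hL
  rw [zterm, hk, negI_pow_even, ← Complex.ofReal_mul, Complex.ofReal_im]

lemma Spart_false_re (u : ℤ → ℤ → ℝ) (m : ℕ) (x : ℤ) : (Spart u m x false).re = 0 := by
  rw [Spart, Complex.re_sum]
  refine Finset.sum_eq_zero fun d hd => ?_
  rw [Finset.mem_filter, mem_cpathsN] at hd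
  obtain ⟨⟨-, hH⟩, hL⟩ := hd
  have hodd : ¬ Even (nturns d) := by
    rw [even_nturns d hH, hL]; simp
  obtain ⟨k, hk⟩ := Nat.not_even_iff_odd.mp hodd
  rw [zterm, hk, show 2*k+1 = k+k+1 by ring, negI_pow_odd]
  rw [mul_assoc, mul_comm (-Complex.I), ← mul_assoc, ← Complex.ofReal_mul]
  simp [neg_one_pow_im]

lemma Spart_eq_sum (u : ℤ → ℤ → ℝ) (m : ℕ) (y : ℤ) (b : Bool) :
    Spart u m y b = ∑ d : Fin (m+1) → Bool,
      if ((moveEndpoint d = y ∧ (List.ofFn d).headI = true) ∧ d (Fin.last m) = b)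
        then zterm u d else 0 := by
  rw [Spart, Finset.sum_filter]
  rw [show cpathsN y m = Finset.univ.filter
    (fun d : Fin (m+1) → Bool => moveEndpoint d = y ∧ (List.ofFn d).headI = true) from rfl]
  rw [Finset.sum_filter]
  exact Finset.sum_congr rfl fun d _ => (ite_and _ _ _ _).symm

lemma branch_true (u : ℤ → ℤ → ℝ) (m : ℕ) (x : ℤ) :
    (∑ d : Fin (m+1) → Bool,
      if (moveEndpoint (Fin.snoc d true : Fin (m+2) → Bool) = x ∧
          (List.ofFn (Fin.snoc d true : Fin (m+2) → Bool)).headI = true)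
        then zterm u (Fin.snoc d true : Fin (m+2) → Bool) else 0)
    = (u (x-1) ((m:ℤ)+1)) * (Spart u m (x-1) true + (-Complex.I) * Spart u m (x-1) false) := by
  rw [Spart_eq_sum, Spart_eq_sum, Finset.mul_sum, ← Finset.sum_add_distrib,
    Finset.mul_sum]
  refine Finset.sum_congr rfl fun d _ => ?_
  have hx1 : x - 1 + 1 = x := by ring
  rw [moveEndpoint_snoc, headI_snoc, zterm, nturns_snoc, fieldWeight_snoc]
  by_cases hc : moveEndpoint d = x - 1 ∧ (List.ofFn d).headI = true
  · cases hL : d (Fin.last m) with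
    | true =>
        simp only [hc.1, hc.2, hL, hx1]
        simp [zterm, pow_succ]
        push_cast
        ring
    | false =>
        simp only [hc.1, hc.2, hL, hx1]
        simp [zterm, pow_succ]
        push_cast
        ring
  · have h1 : ¬(moveEndpoint d + (if (true:Bool) then (1:ℤ) else -1) = x ∧
        (List.ofFn d).headI = true) := by
      simp only [if_true]
      intro h
      exact hc ⟨by omega, h.2⟩
    rw [if_neg h1, if_neg (fun h => hc h.1), if_neg (fun h => hc h.1)]
    ring

lemma branch_false (u : ℤ → ℤ → ℝ) (m : ℕ) (x : ℤ) :
    (∑ d : Fin (m+1) → Bool,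
      if (moveEndpoint (Fin.snoc d false : Fin (m+2) → Bool) = x ∧
          (List.ofFn (Fin.snoc d false : Fin (m+2) → Bool)).headI = true)
        then zterm u (Fin.snoc d false : Fin (m+2) → Bool) else 0)
    = (u x ((m:ℤ)+1)) * ((-Complex.I) * Spart u m (x+1) true + Spart u m (x+1) false) := by
  rw [Spart_eq_sum, Spart_eq_sum, Finset.mul_sum, ← Finset.sum_add_distrib,
    Finset.mul_sum]
  refine Finset.sum_congr rfl fun d _ => ?_
  have hx1 : x + 1 + -1 = x := by ring
  have hx2 : x + 1 - 1 = x := by ring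
  rw [moveEndpoint_snoc, headI_snoc, zterm, nturns_snoc, fieldWeight_snoc]
  by_cases hc : moveEndpoint d = x + 1 ∧ (List.ofFn d).headI = true
  · cases hL : d (Fin.last m) with
    | true =>
        simp only [hc.1, hc.2, hL, hx1, hx2]
        simp [zterm, pow_succ]
        push_cast
        ring
    | false =>
        simp only [hc.1, hc.2, hL, hx1, hx2]
        simp [zterm, pow_succ]
        push_cast
        ring
  · have h1 : ¬(moveEndpoint d + (if (false:Bool) then (1:ℤ) else -1) = x ∧
        (List.ofFn d).headI = true) := by
      simp only [Bool.false_eq_true, if_false]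
      intro h
      exact hc ⟨by omega, h.2⟩
    rw [if_neg h1, if_neg (fun h => hc h.1), if_neg (fun h => hc h.1)]
    ring

lemma split_lemma (u : ℤ → ℤ → ℝ) (m : ℕ) (x : ℤ) :
    ∑ d ∈ cpathsN x (m+1), zterm u d
      = (u x ((m:ℤ)+1)) * ((-Complex.I) * Spart u m (x+1) true + Spart u m (x+1) false)
      + (u (x-1) ((m:ℤ)+1)) * (Spart u m (x-1) true + (-Complex.I) * Spart u m (x-1) false) := by
  rw [show cpathsN x (m+1) = Finset.univ.filter
    (fun d : Fin (m+2) → Bool => moveEndpoint d = x ∧ (List.ofFn d).headI = true) from rfl]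
  rw [Finset.sum_filter]
  rw [← Equiv.sum_comp (snocEquiv (m+1))]
  rw [Fintype.sum_prod_type]
  simp only [snocEquiv, Equiv.coe_fn_mk]
  rw [show ∀ (f : (Fin (m+1) → Bool) → Bool → ℂ), (∑ d : Fin (m+1) → Bool, ∑ b : Bool, f d b)
      = ∑ d : Fin (m+1) → Bool, (f d true + f d false) from
    fun f => Finset.sum_congr rfl fun d _ => Fintype.sum_bool _]
  rw [Finset.sum_add_distrib]
  exact (congrArg₂ (· + ·) (branch_true u m x) (branch_false u m x)).trans (by ring)

end DiracAux

/-- Dirac equation in an external field `u`, where `u x t` is the value of the field on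
the edge with midpoint `(x + 1/2, t + 1/2)`. -/
theorem dirac_equation_field (u : ℤ → ℤ → ℝ) (hu : ∀ x t : ℤ, u x t = 1 ∨ u x t = -1)
    (x t : ℤ) (ht : 1 ≤ t) :
    (af u x (t + 1)).re =
      (1 / Real.sqrt 2) * u x t * ((af u (x + 1) t).re + (af u (x + 1) t).im) ∧
    (af u x (t + 1)).im =
      (1 / Real.sqrt 2) * u (x - 1) t * ((af u (x - 1) t).im - (af u (x - 1) t).re) := by
  obtain ⟨m, rfl⟩ : ∃ m : ℕ, t = (m:ℤ) + 1 := ⟨(t-1).toNat, by omega⟩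
  have key : (∑ d ∈ cpaths x ((m:ℤ)+1+1), (-Complex.I)^(nturns d) * (fieldWeight u d : ℂ))
      = (u x ((m:ℤ)+1)) * ((-Complex.I) * DiracAux.Spart u m (x+1) true
          + DiracAux.Spart u m (x+1) false)
        + (u (x-1) ((m:ℤ)+1)) * (DiracAux.Spart u m (x-1) true
          + (-Complex.I) * DiracAux.Spart u m (x-1) false) := by
    rw [show (∑ d ∈ cpaths x ((m:ℤ)+1+1), (-Complex.I)^(nturns d) * (fieldWeight u d : ℂ))
        = ∑ d ∈ DiracAux.cpathsN x (m+1), DiracAux.zterm u d from rfl]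
    exact DiracAux.split_lemma u m x
  have hA : ∀ y : ℤ, af u y ((m:ℤ)+1)
      = ((Real.sqrt 2 ^ (1-((m:ℤ)+1)) : ℝ) : ℂ) * Complex.I
        * (DiracAux.Spart u m y true + DiracAux.Spart u m y false) := by
    intro y
    rw [af, Complex.ofReal_zpow]
    congr 1
    rw [show (∑ d ∈ cpaths y ((m:ℤ)+1), (-Complex.I)^(nturns d) * (fieldWeight u d : ℂ))
        = ∑ d ∈ DiracAux.cpathsN y m, DiracAux.zterm u d from rfl]
    exact DiracAux.sum_cpaths_eq u m y
  have hB : af u x ((m:ℤ)+1+1)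
      = ((Real.sqrt 2 ^ (1-((m:ℤ)+1+1)) : ℝ) : ℂ) * Complex.I
        * ((u x ((m:ℤ)+1)) * ((-Complex.I) * DiracAux.Spart u m (x+1) true
            + DiracAux.Spart u m (x+1) false)
          + (u (x-1) ((m:ℤ)+1)) * (DiracAux.Spart u m (x-1) true
            + (-Complex.I) * DiracAux.Spart u m (x-1) false)) := by
    rw [af, key, Complex.ofReal_zpow]
  have h2 : Real.sqrt 2 ≠ 0 := by positivity
  have hc2 : (Real.sqrt 2)^(1-((m:ℤ)+1+1)) = (1/Real.sqrt 2) * (Real.sqrt 2)^(1-((m:ℤ)+1)) := by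
    rw [show (1-((m:ℤ)+1+1)) = (-1) + (1-((m:ℤ)+1)) by ring, zpow_add₀ h2, zpow_neg_one,
      one_div]
  set c1 := (Real.sqrt 2)^(1-((m:ℤ)+1)) with hcc1
  set c2 := (Real.sqrt 2)^(1-((m:ℤ)+1+1)) with hcc2
  clear_value c1 c2
  constructor
  · rw [hB, hA (x+1)]
    simp only [Complex.add_re, Complex.add_im, Complex.mul_re, Complex.mul_im,
      Complex.I_re, Complex.I_im, Complex.ofReal_re, Complex.ofReal_im,
      Complex.neg_re, Complex.neg_im, DiracAux.Spart_true_im, DiracAux.Spart_false_re, hc2]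
    ring
  · rw [hB, hA (x-1)]
    simp only [Complex.add_re, Complex.add_im, Complex.mul_re, Complex.mul_im,
      Complex.I_re, Complex.I_im, Complex.ofReal_re, Complex.ofReal_im,
      Complex.neg_re, Complex.neg_im, DiracAux.Spart_true_im, DiracAux.Spart_false_re, hc2]
    ring
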